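/- If both (A - σᵢE)⁻¹ B rᵢ ∈ Image(V) and (A - σᵢE)⁻ᵀ Cᵀ lᵢ ∈ Image(W), then additionally the Hermite condition lᵢᵀ G'(σᵢ) rᵢ = lᵢᵀ G_r'(σᵢ) rᵢ holds for the Petrov–Galerkin reduced model. -/

import Mathlib

open Matrix


attribute [local instance] Matrix.linftyOpNormedRing Matrix.linftyOpNormedAlgebra

noncomputable def phiCLM {k p' m' : ℕ} (B : Matrix (Fin k) (Fin m') ℂ)
    (C : Matrix (Fin p') (Fin k) ℂ) (l : Fin p' → ℂ) (r : Fin m' → ℂ) :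
    Matrix (Fin k) (Fin k) ℂ →L[ℂ] ℂ :=
  LinearMap.toContinuousLinearMap
    { toFun := fun X => l ⬝ᵥ ((C * X * B) *ᵥ r)
      map_add' := by
        intro X Y
        simp [Matrix.mul_add, Matrix.add_mul, Matrix.add_mulVec, dotProduct_add]
      map_smul' := by
        intro c X
        simp [Matrix.mul_smul, Matrix.smul_mul, Matrix.smul_mulVec, dotProduct_smul] }

lemma deriv_inv_form {k p' m' : ℕ} (E A : Matrix (Fin k) (Fin k) ℂ)
    (B : Matrix (Fin k) (Fin m') ℂ) (C : Matrix (Fin p') (Fin k) ℂ)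
    (l : Fin p' → ℂ) (r : Fin m' → ℂ) (σ : ℂ) (h : IsUnit (σ • E - A).det) :
    deriv (fun s : ℂ => l ⬝ᵥ ((C * (s • E - A)⁻¹ * B) *ᵥ r)) σ
      = -(l ⬝ᵥ ((C * ((σ • E - A)⁻¹ * E * (σ • E - A)⁻¹) * B) *ᵥ r)) := by
  have hKu : IsUnit (σ • E - A) := (Matrix.isUnit_iff_isUnit_det _).mpr h
  have hu : HasDerivAt (fun s : ℂ => s • E - A) E σ := by
    have := ((hasDerivAt_id' σ).smul_const E).sub_const A
    rwa [one_smul] at this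
  have hinv : HasFDerivAt Ring.inverse
      (-ContinuousLinearMap.mulLeftRight ℂ _ ↑hKu.unit⁻¹ ↑hKu.unit⁻¹) (σ • E - A) := by
    simpa [hKu.unit_spec] using hasFDerivAt_ringInverse (𝕜 := ℂ) hKu.unit
  have hcomp : HasDerivAt (fun s : ℂ => Ring.inverse (s • E - A))
      (-((σ • E - A)⁻¹ * E * (σ • E - A)⁻¹)) σ := by
    have := hinv.comp_hasDerivAt σ hu
    simp [Function.comp_def, Matrix.coe_units_inv, hKu.unit_spec, Matrix.nonsing_inv_eq_ringInverse,
      ContinuousLinearMap.mulLeftRight_apply] at this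
    rw [Matrix.nonsing_inv_eq_ringInverse]
    exact this
  have hfin : HasDerivAt (fun s : ℂ => (phiCLM B C l r) (Ring.inverse (s • E - A)))
      ((phiCLM B C l r) (-((σ • E - A)⁻¹ * E * (σ • E - A)⁻¹))) σ :=
    (phiCLM B C l r).hasFDerivAt.comp_hasDerivAt σ hcomp
  have heq : (fun s : ℂ => l ⬝ᵥ ((C * (s • E - A)⁻¹ * B) *ᵥ r))
      = fun s : ℂ => (phiCLM B C l r) (Ring.inverse (s • E - A)) := by
    funext s
    simp [phiCLM, Matrix.nonsing_inv_eq_ringInverse]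
  rw [heq, hfin.deriv]
  simp [phiCLM, Matrix.neg_mul, Matrix.mul_neg, Matrix.neg_mulVec, dotProduct_neg]

lemma dot_shift {a b : ℕ} (l : Fin a → ℂ) (M : Matrix (Fin a) (Fin b) ℂ) (v : Fin b → ℂ) :
    l ⬝ᵥ (M *ᵥ v) = (Mᵀ *ᵥ l) ⬝ᵥ v := by
  rw [dotProduct_mulVec, Matrix.mulVec_transpose]

/-- If both `(A - σᵢE)⁻¹ B rᵢ ∈ Image(V)` and `(A - σᵢE)⁻ᵀ Cᵀ lᵢ ∈ Image(W)`,
then the Hermite condition `lᵢᵀ G'(σᵢ) rᵢ = lᵢᵀ G_r'(σᵢ) rᵢ` holds for the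
Petrov-Galerkin reduced model. -/
theorem stmt4 {n m p q : ℕ}
    (E A : Matrix (Fin n) (Fin n) ℂ) (B : Matrix (Fin n) (Fin m) ℂ)
    (C : Matrix (Fin p) (Fin n) ℂ)
    (V W : Matrix (Fin n) (Fin q) ℂ)
    (σ : Fin q → ℂ) (r : Fin q → Fin m → ℂ) (l : Fin q → Fin p → ℂ)
    (hr : ∀ i, r i ≠ 0) (hl : ∀ i, l i ≠ 0)
    (hfull : ∀ i, IsUnit (σ i • E - A).det)
    (hred : ∀ i, IsUnit (σ i • (Wᵀ * E * V) - Wᵀ * A * V).det)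
    (hmemV : ∀ i, ∃ x : Fin q → ℂ, V *ᵥ x = (A - σ i • E)⁻¹ *ᵥ (B *ᵥ r i))
    (hmemW : ∀ i, ∃ x : Fin q → ℂ, W *ᵥ x = ((A - σ i • E)ᵀ)⁻¹ *ᵥ (Cᵀ *ᵥ l i)) :
    ∀ i, deriv (fun s : ℂ => l i ⬝ᵥ ((C * (s • E - A)⁻¹ * B) *ᵥ r i)) (σ i)
       = deriv (fun s : ℂ =>
           l i ⬝ᵥ ((C * V * (s • (Wᵀ * E * V) - Wᵀ * A * V)⁻¹ * (Wᵀ * B)) *ᵥ r i)) (σ i) := by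
  intro i
  obtain ⟨x, hx⟩ := hmemV i
  obtain ⟨y, hy⟩ := hmemW i
  set K := σ i • E - A with hKdef
  set Kr := σ i • (Wᵀ * E * V) - Wᵀ * A * V with hKrdef
  have hK := hfull i
  have hKrU := hred i
  have hKinv : K * K⁻¹ = 1 := Matrix.mul_nonsing_inv _ hK
  have hKinv' : K⁻¹ * K = 1 := Matrix.nonsing_inv_mul _ hK
  have hKrinv' : Kr⁻¹ * Kr = 1 := Matrix.nonsing_inv_mul _ hKrU
  -- (A - σE)⁻¹ = -K⁻¹
  have hAinv : (A - σ i • E)⁻¹ = -K⁻¹ := by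
    apply Matrix.inv_eq_right_inv
    rw [show A - σ i • E = -K by rw [hKdef, neg_sub], neg_mul_neg, hKinv]
  -- ((A - σE)ᵀ)⁻¹ = -(K⁻¹)ᵀ
  have hAinvT : ((A - σ i • E)ᵀ)⁻¹ = -(K⁻¹)ᵀ := by
    apply Matrix.inv_eq_right_inv
    rw [show A - σ i • E = -K by rw [hKdef, neg_sub], Matrix.transpose_neg, neg_mul_neg,
      ← Matrix.transpose_mul, hKinv', Matrix.transpose_one]
  have hx' : V *ᵥ x = -(K⁻¹ *ᵥ (B *ᵥ r i)) := by
    rw [hx, hAinv, Matrix.neg_mulVec]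
  have hy' : W *ᵥ y = -((K⁻¹)ᵀ *ᵥ (Cᵀ *ᵥ l i)) := by
    rw [hy, hAinvT, Matrix.neg_mulVec]
  have hKr : Kr = Wᵀ * K * V := by
    rw [hKrdef, hKdef]
    simp [Matrix.mul_sub, Matrix.sub_mul, Matrix.mul_smul, Matrix.smul_mul, Matrix.mul_assoc]
  have hxKr : Kr *ᵥ x = -((Wᵀ * B) *ᵥ r i) := by
    rw [hKr, ← Matrix.mulVec_mulVec, ← Matrix.mulVec_mulVec, hx', Matrix.mulVec_neg,
      Matrix.mulVec_mulVec, hKinv, Matrix.one_mulVec, Matrix.mulVec_neg, Matrix.mulVec_mulVec]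
  have hxeq : Kr⁻¹ *ᵥ ((Wᵀ * B) *ᵥ r i) = -x := by
    have := congrArg (fun v => Kr⁻¹ *ᵥ v) hxKr
    simpa [Matrix.mulVec_mulVec, hKrinv', Matrix.one_mulVec, Matrix.mulVec_neg, neg_eq_iff_eq_neg]
      using this.symm
  have hKrT : Krᵀ = Vᵀ * Kᵀ * W := by
    rw [hKr]
    simp [Matrix.transpose_mul, Matrix.mul_assoc]
  have hyKr : Krᵀ *ᵥ y = -((C * V)ᵀ *ᵥ l i) := by
    rw [hKrT, ← Matrix.mulVec_mulVec, ← Matrix.mulVec_mulVec, hy', Matrix.mulVec_neg,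
      Matrix.mulVec_mulVec, ← Matrix.transpose_mul, hKinv', Matrix.transpose_one,
      Matrix.one_mulVec, Matrix.mulVec_neg, Matrix.mulVec_mulVec, Matrix.transpose_mul]
  have hKrTinv : (Krᵀ)⁻¹ * Krᵀ = 1 := by
    apply Matrix.nonsing_inv_mul
    rwa [Matrix.det_transpose]
  have hyeq : (Kr⁻¹)ᵀ *ᵥ ((C * V)ᵀ *ᵥ l i) = -y := by
    rw [Matrix.transpose_nonsing_inv]
    have := congrArg (fun v => (Krᵀ)⁻¹ *ᵥ v) hyKr
    simpa [Matrix.mulVec_mulVec, hKrTinv, Matrix.one_mulVec, Matrix.mulVec_neg, neg_eq_iff_eq_neg]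
      using this.symm
  rw [deriv_inv_form E A B C (l i) (r i) (σ i) hK,
    deriv_inv_form (Wᵀ * E * V) (Wᵀ * A * V) (Wᵀ * B) (C * V) (l i) (r i) (σ i) hKrU]
  congr 1
  calc l i ⬝ᵥ ((C * (K⁻¹ * E * K⁻¹) * B) *ᵥ r i)
      = l i ⬝ᵥ (C *ᵥ (K⁻¹ *ᵥ (E *ᵥ (K⁻¹ *ᵥ (B *ᵥ r i))))) := by
        simp [Matrix.mulVec_mulVec, Matrix.mul_assoc]
    _ = ((K⁻¹)ᵀ *ᵥ (Cᵀ *ᵥ l i)) ⬝ᵥ (E *ᵥ (K⁻¹ *ᵥ (B *ᵥ r i))) := by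
        rw [dot_shift, dot_shift]
    _ = (W *ᵥ y) ⬝ᵥ (E *ᵥ (V *ᵥ x)) := by
        rw [hx', hy']
        simp only [Matrix.mulVec_neg, dotProduct_neg, neg_dotProduct, neg_neg]
    _ = y ⬝ᵥ ((Wᵀ * E * V) *ᵥ x) := by
        conv_rhs => rw [show (Wᵀ * E * V) *ᵥ x = Wᵀ *ᵥ (E *ᵥ (V *ᵥ x)) by
          simp [Matrix.mulVec_mulVec, Matrix.mul_assoc], dot_shift, Matrix.transpose_transpose]
    _ = ((Kr⁻¹)ᵀ *ᵥ ((C * V)ᵀ *ᵥ l i)) ⬝ᵥ ((Wᵀ * E * V) *ᵥ (Kr⁻¹ *ᵥ ((Wᵀ * B) *ᵥ r i))) := by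
        rw [hxeq, hyeq]
        simp only [Matrix.mulVec_neg, dotProduct_neg, neg_dotProduct, neg_neg]
    _ = l i ⬝ᵥ ((C * V * (Kr⁻¹ * (Wᵀ * E * V) * Kr⁻¹) * (Wᵀ * B)) *ᵥ r i) := by
        rw [← dot_shift, ← dot_shift]
        simp [Matrix.mulVec_mulVec, Matrix.mul_assoc]
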